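/- Let G be a strongly connected digraph, H its condensed graph (contracting 2-edge-connected components). Two vertices u, w of G lying in different 2-edge-connected components are 2-edge-connected in G if and only if for every cut (S,T) of H separating h(u) from h(w) there are at least two edges of H from S to T and at least two from T to S. -/

import Mathlib

variable {V : Type*}

/-- A walk in a digraph given by its edge set `E`, recorded as a list of edges. -/
inductive IsWalk (E : Set (V × V)) : V → V → List (V × V) → Prop
  | nil (u : V) : IsWalk E u u []
  | cons {u v w : V} {p : List (V × V)} (h : (u, v) ∈ E) (hp : IsWalk E v w p) :
      IsWalk E u w ((u, v) :: p)

def Reaches (E : Set (V × V)) (u v : V) : Prop := ∃ p, IsWalk E u v p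

def StronglyConnected (E : Set (V × V)) : Prop := ∀ u v : V, Reaches E u v

/-- Two edge-disjoint directed paths from `u` to `v`. -/
def TwoEDP (E : Set (V × V)) (u v : V) : Prop :=
  ∃ p q, IsWalk E u v p ∧ IsWalk E u v q ∧ p.Disjoint q

/-- `u` and `v` are 2-edge-connected. -/
def TwoEC (E : Set (V × V)) (u v : V) : Prop := TwoEDP E u v ∧ TwoEDP E v u

/-- A 2-edge-connected block: a maximal set of pairwise 2-edge-connected vertices. -/
def Is2ECBlock (E : Set (V × V)) (B : Set V) : Prop :=
  (∀ u ∈ B, ∀ v ∈ B, TwoEC E u v) ∧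
    ∀ C : Set V, B ⊆ C → (∀ u ∈ C, ∀ v ∈ C, TwoEC E u v) → C = B

def SameBlocks (E E' : Set (V × V)) : Prop :=
  ∀ B : Set V, Is2ECBlock E B ↔ Is2ECBlock E' B

/-- A strong bridge: an edge whose removal increases the number of strongly
connected components, i.e. destroys the mutual reachability of some pair. -/
def IsStrongBridge (E : Set (V × V)) (e : V × V) : Prop :=
  e ∈ E ∧ ∃ u v : V, (Reaches E u v ∧ Reaches E v u) ∧
    ¬ (Reaches (E \ {e}) u v ∧ Reaches (E \ {e}) v u)

/-- A 2-edge-connected digraph: strongly connected and stays so after deleting any edge. -/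
def Is2ECGraph (E : Set (V × V)) : Prop :=
  StronglyConnected E ∧ ∀ e ∈ E, StronglyConnected (E \ {e})

/-- Edges of `E` induced on the vertex set `C`. -/
def restrictE (E : Set (V × V)) (C : Set V) : Set (V × V) :=
  {e ∈ E | e.1 ∈ C ∧ e.2 ∈ C}

def SCOn (E' : Set (V × V)) (C : Set V) : Prop :=
  ∀ u ∈ C, ∀ v ∈ C, Reaches E' u v

/-- `E'` is a 2-edge-connected (spanning sub)graph on the vertex set `C`. -/
def Is2ECOn (E' : Set (V × V)) (C : Set V) : Prop :=
  SCOn E' C ∧ ∀ e ∈ E', SCOn (E' \ {e}) C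

/-- A 2-edge-connected component: a maximal vertex set inducing a 2-edge-connected subgraph. -/
def Is2ECComponent (E : Set (V × V)) (C : Set V) : Prop :=
  Is2ECOn (restrictE E C) C ∧
    ∀ D : Set V, C ⊆ D → Is2ECOn (restrictE E D) D → D = C

/-- A solution to 2EC-B: a strongly connected spanning subgraph with the same
2-edge-connected blocks. -/
def IsSolutionB (E E' : Set (V × V)) : Prop :=
  E' ⊆ E ∧ StronglyConnected E' ∧ SameBlocks E' E

/-- The reverse digraph. -/
def revE (E : Set (V × V)) : Set (V × V) := {e | (e.2, e.1) ∈ E}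

/-- A bridge of the flow graph with start vertex `s`: an edge contained in every
walk from `s` to its head. -/
def IsBridge (E : Set (V × V)) (s : V) (e : V × V) : Prop :=
  e ∈ E ∧ ∀ p, IsWalk E s e.2 p → e ∈ p

/-- `u` is a vertex of the walk `p` starting at `s`. -/
def OnWalk (s : V) (p : List (V × V)) (u : V) : Prop :=
  u = s ∨ ∃ e ∈ p, e.2 = u

/-- `u` dominates `w` in the flow graph with start `s`. -/
def Dom (E : Set (V × V)) (s u w : V) : Prop :=
  ∀ p, IsWalk E s w p → OnWalk s p u

def PDom (E : Set (V × V)) (s u w : V) : Prop := Dom E s u w ∧ u ≠ w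

/-- `u` is the immediate dominator of `w`. -/
def Idom (E : Set (V × V)) (s u w : V) : Prop :=
  PDom E s u w ∧ ∀ x, PDom E s x w → Dom E s x u

/-- Marked vertices: roots of the trees of the canonical decomposition of the
dominator tree, i.e. `s` and the heads of bridges of `G(s)`. -/
def Marked (E : Set (V × V)) (s r : V) : Prop :=
  r = s ∨ ∃ e, IsBridge E s e ∧ e.2 = r

/-- `w` belongs to the tree `T(r)` of the canonical decomposition:
`r` is the nearest marked dominator of `w`. -/
def InTree (E : Set (V × V)) (s r w : V) : Prop :=
  Marked E s r ∧ Dom E s r w ∧ ∀ x, Marked E s x → Dom E s x w → Dom E s x r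

/-- A spanning tree of the flow graph `G(s)` rooted at `s`. -/
def IsSpanningTree (E : Set (V × V)) (s : V) (T : Set (V × V)) : Prop :=
  T ⊆ E ∧ (∀ v, Reaches T s v) ∧ (∀ v, v ≠ s → ∃! e, e ∈ T ∧ e.2 = v) ∧
    ∀ e ∈ T, e.2 ≠ s

/-- Two independent spanning trees: for every `v`, the two tree paths from `s`
to `v` share only dominators of `v`. -/
def IndependentTrees (E : Set (V × V)) (s : V) (T₁ T₂ : Set (V × V)) : Prop :=
  IsSpanningTree E s T₁ ∧ IsSpanningTree E s T₂ ∧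
    ∀ v p q, IsWalk T₁ s v p → IsWalk T₂ s v q →
      ∀ u, OnWalk s p u → OnWalk s q u → Dom E s u v

/-- The contraction map defining the first-level auxiliary graph `G_r`:
vertices of `T(r)` stay put, descendants of a marked child `x` of a boundary
vertex of `T(r)` are contracted into `x`, and non-descendants of `r` are
contracted into `d(r)`. -/
def ContractsTo (E : Set (V × V)) (s r v x : V) : Prop :=
  (InTree E s r v ∧ x = v) ∨
  (Dom E s r v ∧ ¬ InTree E s r v ∧ Marked E s x ∧ Dom E s x v ∧
    ∃ u, InTree E s r u ∧ Idom E s u x) ∨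
  (¬ Dom E s r v ∧ Idom E s x r)

/-- The edge set of the first-level auxiliary graph `G_r`. -/
def AuxE (E : Set (V × V)) (s r : V) : Set (V × V) :=
  {e | ∃ a b, (a, b) ∈ E ∧ ContractsTo E s r a e.1 ∧ ContractsTo E s r b e.2}

def cutEdges (E : Set (V × V)) (U W : Set V) : Set (V × V) :=
  {e ∈ E | e.1 ∈ U ∧ e.2 ∈ W}

def IsCut (u w : V) (U W : Set V) : Prop := u ∈ U ∧ w ∈ W ∧ Disjoint U W

def IsMinCut (E : Set (V × V)) (u w : V) (U W : Set V) : Prop :=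
  IsCut u w U W ∧ ∀ U' W' : Set V, IsCut u w U' W' →
    (cutEdges E U W).ncard ≤ (cutEdges E U' W').ncard

/-- There exist `k` pairwise edge-disjoint walks from `u` to `w`. -/
def HasEDP (E : Set (V × V)) (u w : V) (k : ℕ) : Prop :=
  ∃ P : Fin k → List (V × V), (∀ i, IsWalk E u w (P i)) ∧
    ∀ i j, i ≠ j → (P i).Disjoint (P j)

/-- The (loop-free, simple) quotient of the inter-component edges `F` under the
component map `h`. -/
def quotE {V' : Type*} (h : V → V') (F : Set (V × V)) : Set (V' × V') :=
  {q | ∃ e ∈ F, h e.1 = q.1 ∧ h e.2 = q.2 ∧ q.1 ≠ q.2}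

/-- A solution to 2EC-C: a strongly connected spanning subgraph with the same
2-edge-connected components. -/
def IsSolutionC (E E' : Set (V × V)) : Prop :=
  E' ⊆ E ∧ StronglyConnected E' ∧
    ∀ C : Set V, Is2ECComponent E C ↔ Is2ECComponent E' C

/-- One step of the deletion process: delete an edge `(x,y)` such that two
edge-disjoint `x → y` paths remain. -/
def DelStep (E₁ E₂ : Set (V × V)) : Prop :=
  ∃ x y : V, (x, y) ∈ E₁ ∧ E₂ = E₁ \ {(x, y)} ∧ TwoEDP E₂ x y



section Helpers

theorem isWalk_mono {E E' : Set (V × V)} (hEE : E ⊆ E') :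
    ∀ {p : List (V × V)} {a b : V}, IsWalk E a b p → IsWalk E' a b p := by
  intro p
  induction p with
  | nil => intro a b h; cases h; exact .nil _
  | cons e p ih =>
    intro a b h
    cases h with
    | cons he hp => exact .cons (hEE he) (ih hp)

theorem isWalk_edges {E : Set (V × V)} :
    ∀ {p : List (V × V)} {a b : V}, IsWalk E a b p → ∀ e ∈ p, e ∈ E := by
  intro p
  induction p with
  | nil => intro a b h e he; simp at he
  | cons e p ih =>
    intro a b h f hf
    cases h with
    | cons he hp =>
      rcases List.mem_cons.1 hf with rfl | hf
      · exact he
      · exact ih hp f hf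

theorem isWalk_append {E : Set (V × V)} :
    ∀ {p : List (V × V)} {a b c : V} {q : List (V × V)},
      IsWalk E a b p → IsWalk E b c q → IsWalk E a c (p ++ q) := by
  intro p
  induction p with
  | nil => intro a b c q h hq; cases h; simpa using hq
  | cons e p ih =>
    intro a b c q h hq
    cases h with
    | cons he hp => exact .cons he (ih hp hq)

theorem reaches_trans {E : Set (V × V)} {a b c : V} (h1 : Reaches E a b)
    (h2 : Reaches E b c) : Reaches E a c := by
  obtain ⟨p, hp⟩ := h1; obtain ⟨q, hq⟩ := h2
  exact ⟨p ++ q, isWalk_append hp hq⟩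

theorem reaches_step {E : Set (V × V)} {a b : V} (h : (a, b) ∈ E) : Reaches E a b :=
  ⟨[(a, b)], .cons h (.nil b)⟩

theorem reaches_mono {E E' : Set (V × V)} (hEE : E ⊆ E') {a b : V}
    (h : Reaches E a b) : Reaches E' a b := by
  obtain ⟨p, hp⟩ := h; exact ⟨p, isWalk_mono hEE hp⟩

/-- Suffix of a walk after an occurrence of an edge. -/
theorem isWalk_suffix {E : Set (V × V)} :
    ∀ {p : List (V × V)} {a b : V}, IsWalk E a b p → ∀ x y, (x, y) ∈ p →
      ∃ s, IsWalk E y b s ∧ (∀ e ∈ s, e ∈ p) ∧ s.length < p.length := by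
  intro p
  induction p with
  | nil => intro a b h x y hxy; simp at hxy
  | cons e p ih =>
    intro a b h x y hxy
    cases h with
    | @cons _ v _ _ he hp =>
      rcases List.mem_cons.1 hxy with heq | hmem
      · obtain ⟨rfl, rfl⟩ := Prod.ext_iff.1 heq
        exact ⟨p, hp, fun e he => List.mem_cons_of_mem _ he, by simp⟩
      · obtain ⟨s, hs, hsub, hlen⟩ := ih hp x y hmem
        refine ⟨s, hs, fun e he => List.mem_cons_of_mem _ (hsub e he), ?_⟩
        simp only [List.length_cons]; omega

/-- Every walk contains a duplicate-free walk with the same endpoints. -/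
theorem isWalk_dedup {E : Set (V × V)} :
    ∀ (n : ℕ) (p : List (V × V)) (a b : V), p.length ≤ n → IsWalk E a b p →
      ∃ q, IsWalk E a b q ∧ q.Nodup ∧ ∀ e ∈ q, e ∈ p := by
  intro n
  induction n with
  | zero =>
    intro p a b hl h
    have hp0 : p = [] := List.length_eq_zero_iff.mp (Nat.le_zero.mp hl)
    subst hp0
    cases h
    exact ⟨[], .nil _, by simp, by simp⟩
  | succ n ih =>
    intro p a b hl h
    cases h with
    | nil => exact ⟨[], .nil _, by simp, by simp⟩
    | @cons _ v _ p' he hp =>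
      by_cases hmem : (a, v) ∈ p'
      · obtain ⟨s, hs, hsub, hlen⟩ := isWalk_suffix hp a v hmem
        obtain ⟨q, hq, hnd, hqsub⟩ := ih ((a, v) :: s) a b
          (by simp only [List.length_cons] at hl ⊢; omega) (.cons he hs)
        refine ⟨q, hq, hnd, fun e hqe => ?_⟩
        rcases List.mem_cons.1 (hqsub e hqe) with rfl | hes
        · exact List.mem_cons_self
        · exact List.mem_cons_of_mem _ (hsub e hes)
      · obtain ⟨q, hq, hnd, hqsub⟩ := ih p' v b
          (by simp only [List.length_cons] at hl; omega) hp
        refine ⟨(a, v) :: q, .cons he hq, ?_, ?_⟩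
        · exact List.nodup_cons.2 ⟨fun hc => hmem (hqsub _ hc), hnd⟩
        · intro e hqe
          rcases List.mem_cons.1 hqe with rfl | hes
          · exact List.mem_cons_self
          · exact List.mem_cons_of_mem _ (hqsub e hes)

/-- A walk from inside `U` to outside `U` crosses `U`. -/
theorem exists_cross {E : Set (V × V)} {U : Set V} :
    ∀ {p : List (V × V)} {a b : V}, IsWalk E a b p → a ∈ U → b ∉ U →
      ∃ e ∈ p, e.1 ∈ U ∧ e.2 ∉ U := by
  intro p
  induction p with
  | nil => intro a b h ha hb; cases h; exact absurd ha hb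
  | cons e p ih =>
    intro a b h ha hb
    cases h with
    | @cons _ v _ _ he hp =>
      by_cases hv : v ∈ U
      · obtain ⟨f, hf, h1, h2⟩ := ih hp hv hb
        exact ⟨f, List.mem_cons_of_mem _ hf, h1, h2⟩
      · exact ⟨(a, v), List.mem_cons_self, ha, hv⟩

/-- If no edge of the walk enters `U` and the start is outside `U`,
then every edge source of the walk is outside `U`. -/
theorem stay_out {E : Set (V × V)} {U : Set V} :
    ∀ {p : List (V × V)} {a b : V}, IsWalk E a b p → a ∉ U →
      (∀ e ∈ p, e.2 ∈ U → e.1 ∈ U) → ∀ e ∈ p, e.1 ∉ U := by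
  intro p
  induction p with
  | nil => intro a b h ha hcl e he; simp at he
  | cons e p ih =>
    intro a b h ha hcl f hf
    cases h with
    | @cons _ v _ _ he hp =>
      have hv : v ∉ U := fun hv =>
        ha (hcl (a, v) (List.mem_cons_self) hv)
      rcases List.mem_cons.1 hf with rfl | hfm
      · exact ha
      · exact ih hp hv (fun e hep => hcl e (List.mem_cons_of_mem _ hep)) f hfm

/-- On a walk along edges that never re-enter `U`, there is at most one
edge leaving `U`. -/
theorem unique_cross {E : Set (V × V)} {U : Set V} :
    ∀ {p : List (V × V)} {a b : V}, IsWalk E a b p →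
      (∀ e ∈ p, e.2 ∈ U → e.1 ∈ U) →
      ∀ e1 ∈ p, ∀ e2 ∈ p, e1.1 ∈ U → e1.2 ∉ U → e2.1 ∈ U → e2.2 ∉ U → e1 = e2 := by
  intro p
  induction p with
  | nil => intro a b h hcl e1 he1; simp at he1
  | cons e p ih =>
    intro a b h hcl e1 he1 e2 he2 h11 h12 h21 h22
    cases h with
    | @cons _ v _ _ he hp =>
      have hcl' : ∀ e ∈ p, e.2 ∈ U → e.1 ∈ U := fun e hep =>
        hcl e (List.mem_cons_of_mem _ hep)
      rcases List.mem_cons.1 he1 with rfl | hm1 <;>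
        rcases List.mem_cons.1 he2 with rfl | hm2
      · rfl
      · exact absurd h21 (stay_out hp h12 hcl' e2 hm2)
      · exact absurd h11 (stay_out hp h22 hcl' e1 hm1)
      · exact ih hp hcl' e1 hm1 e2 hm2 h11 h12 h21 h22

end Helpers


section Degree

open scoped Classical

variable [Fintype V]

/-- Out-degree minus in-degree, as an integer. -/
noncomputable def ddeg (F : Set (V × V)) (v : V) : ℤ :=
  ({e ∈ F | e.1 = v}).ncard - ({e ∈ F | e.2 = v}).ncard

theorem ddeg_union {A B : Set (V × V)} (hAB : Disjoint A B) (v : V) :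
    ddeg (A ∪ B) v = ddeg A v + ddeg B v := by
  have h1 : {e ∈ A ∪ B | e.1 = v} = {e ∈ A | e.1 = v} ∪ {e ∈ B | e.1 = v} := by
    ext e; simp [Set.mem_union]
  have h2 : {e ∈ A ∪ B | e.2 = v} = {e ∈ A | e.2 = v} ∪ {e ∈ B | e.2 = v} := by
    ext e; simp [Set.mem_union]
  have d1 : Disjoint {e ∈ A | e.1 = v} {e ∈ B | e.1 = v} :=
    hAB.mono (Set.sep_subset _ _) (Set.sep_subset _ _)
  have d2 : Disjoint {e ∈ A | e.2 = v} {e ∈ B | e.2 = v} :=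
    hAB.mono (Set.sep_subset _ _) (Set.sep_subset _ _)
  rw [ddeg, h1, h2, Set.ncard_union_eq d1 (Set.toFinite _) (Set.toFinite _),
    Set.ncard_union_eq d2 (Set.toFinite _) (Set.toFinite _)]
  simp only [ddeg]
  push_cast
  ring

theorem ddeg_diff {A B : Set (V × V)} (hBA : B ⊆ A) (v : V) :
    ddeg (A \ B) v = ddeg A v - ddeg B v := by
  have h : A = (A \ B) ∪ B := by
    rw [Set.diff_union_self, Set.union_eq_self_of_subset_right hBA]
  have hd : Disjoint (A \ B) B := Set.disjoint_sdiff_left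
  have := ddeg_union hd v
  rw [← h] at this
  omega

theorem ddeg_singleton (x : V × V) (v : V) :
    ddeg {x} v = (if x.1 = v then 1 else 0) - (if x.2 = v then 1 else 0) := by
  classical
  have h1 : {e ∈ ({x} : Set (V × V)) | e.1 = v} =
      if x.1 = v then {x} else ∅ := by
    split_ifs with h <;> ext e <;> simp_all
  have h2 : {e ∈ ({x} : Set (V × V)) | e.2 = v} =
      if x.2 = v then {x} else ∅ := by
    split_ifs with h <;> ext e <;> simp_all
  rw [ddeg, h1, h2]
  split_ifs <;> simp

theorem ddeg_swap_image (X : Set (V × V)) (v : V) :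
    ddeg (Prod.swap '' X) v = - ddeg X v := by
  have hinj : Function.Injective (Prod.swap : V × V → V × V) :=
    Prod.swap_injective
  have h1 : {e ∈ Prod.swap '' X | e.1 = v} = Prod.swap '' {e ∈ X | e.2 = v} := by
    ext e
    constructor
    · rintro ⟨⟨x, hx, rfl⟩, h⟩
      exact ⟨x, ⟨hx, h⟩, rfl⟩
    · rintro ⟨x, ⟨hx, h⟩, rfl⟩
      exact ⟨⟨x, hx, rfl⟩, h⟩
  have h2 : {e ∈ Prod.swap '' X | e.2 = v} = Prod.swap '' {e ∈ X | e.1 = v} := by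
    ext e
    constructor
    · rintro ⟨⟨x, hx, rfl⟩, h⟩
      exact ⟨x, ⟨hx, h⟩, rfl⟩
    · rintro ⟨x, ⟨hx, h⟩, rfl⟩
      exact ⟨⟨x, hx, rfl⟩, h⟩
  rw [ddeg, h1, h2, Set.ncard_image_of_injective _ hinj,
    Set.ncard_image_of_injective _ hinj]
  simp only [ddeg]
  push_cast
  ring

theorem ddeg_walkset {E : Set (V × V)} :
    ∀ {p : List (V × V)} {a b : V}, IsWalk E a b p → p.Nodup → ∀ v,
      ddeg {e | e ∈ p} v =
        (if a = v then 1 else 0) - (if b = v then 1 else 0) := by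
  intro p
  induction p with
  | nil =>
    intro a b h hnd v
    cases h
    have : ({e | e ∈ ([] : List (V × V))} : Set (V × V)) = ∅ := by simp
    rw [this]
    simp [ddeg]
  | cons e p ih =>
    intro a b h hnd v
    cases h with
    | @cons _ x _ _ he hp =>
      have hsplit : ({f | f ∈ (a, x) :: p} : Set (V × V)) =
          {(a, x)} ∪ {f | f ∈ p} := by
        ext f; simp [or_comm]
      have hdisj : Disjoint ({(a, x)} : Set (V × V)) {f | f ∈ p} := by
        rw [Set.disjoint_left]
        rintro f rfl hf
        exact (List.nodup_cons.1 hnd).1 hf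
      rw [hsplit, ddeg_union hdisj, ddeg_singleton,
        ih hp (List.nodup_cons.1 hnd).2 v]
      simp only
      split_ifs <;> omega

/-- Walk extraction from a set with positive excess at the start. -/
theorem extract_walk {w : V} :
    ∀ (n : ℕ) (F : Set (V × V)) (c : V) (f : V → ℤ), F.ncard = n → c ≠ w →
      (∀ v, ddeg F v = f v) → 1 ≤ f c → (∀ v, v ≠ w → 0 ≤ f v) →
      ∃ p, IsWalk F c w p ∧ p.Nodup := by
  intro n
  induction n using Nat.strong_induction_on with
  | _ n ih =>
    intro F c f hn hcw hdeg hc hnn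
    have hout : 1 ≤ ({e ∈ F | e.1 = c}).ncard := by
      have := hdeg c
      rw [ddeg] at this
      omega
    obtain ⟨e, he, hec⟩ : ∃ e ∈ F, e.1 = c := by
      obtain ⟨e, he⟩ :=
        Set.nonempty_of_ncard_ne_zero (s := {e ∈ F | e.1 = c}) (by omega)
      exact ⟨e, he.1, he.2⟩
    obtain ⟨d, he⟩ : ∃ d, (c, d) ∈ F := ⟨e.2, by rw [← hec]; simpa using he⟩
    by_cases hdw : d = w
    · subst hdw
      exact ⟨[(c, d)], .cons he (.nil d), by simp⟩
    · set F' : Set (V × V) := F \ {(c, d)} with hF'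
      have hsub : ({(c, d)} : Set (V × V)) ⊆ F := by simpa using he
      have hcard : F'.ncard = n - 1 := by
        rw [hF', Set.ncard_diff hsub (Set.toFinite _)]
        simp [hn]
      have hn1 : 1 ≤ n := by
        rw [← hn]
        have : F.Nonempty := ⟨_, he⟩
        have := Set.ncard_pos (Set.toFinite F) |>.2 this
        omega
      set f' : V → ℤ := fun v =>
        f v - (if c = v then 1 else 0) + (if d = v then 1 else 0) with hf'
      have hdeg' : ∀ v, ddeg F' v = f' v := by
        intro v
        rw [hF', ddeg_diff hsub v, ddeg_singleton, hf']
        have := hdeg v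
        dsimp only
        split_ifs <;> omega
      have hfd : 1 ≤ f' d := by
        rw [hf']
        dsimp only
        rw [if_pos (rfl : d = d)]
        by_cases hcd : c = d
        · rw [if_pos hcd, ← hcd]
          omega
        · rw [if_neg hcd]
          have := hnn d hdw
          omega
      have hnn' : ∀ v, v ≠ w → 0 ≤ f' v := by
        intro v hvw
        rw [hf']
        dsimp only
        have hv := hnn v hvw
        by_cases h1 : c = v
        · subst h1
          rw [if_pos rfl]
          by_cases h2 : d = c
          · rw [if_pos h2]; omega
          · rw [if_neg h2]; omega
        · rw [if_neg h1]
          by_cases h2 : d = v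
          · rw [if_pos h2]; omega
          · rw [if_neg h2]; omega
      obtain ⟨p, hp, hnd⟩ := ih (n - 1) (by omega) F' d f' hcard hdw hdeg' hfd hnn'
      refine ⟨(c, d) :: p, .cons (by simpa using he) (isWalk_mono (by simp [hF']) hp), ?_⟩
      refine List.nodup_cons.2 ⟨fun hc' => ?_, hnd⟩
      have := isWalk_edges hp _ hc'
      simp [hF'] at this

end Degree


section Menger

open scoped Classical

variable [Fintype V]

/-- Menger's theorem for two edge-disjoint paths: if no single edge deletion
destroys reachability from `u` to `w`, then there are two edge-disjoint walks. -/
theorem menger_two {E : Set (V × V)} {u w : V}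
    (h2 : ∀ e : V × V, Reaches (E \ {e}) u w) : TwoEDP E u w := by
  by_cases huw : u = w
  · subst huw
    exact ⟨[], [], .nil u, .nil u, by simp [List.Disjoint]⟩
  obtain ⟨p0, hp0⟩ : Reaches E u w := reaches_mono Set.diff_subset (h2 (u, u))
  obtain ⟨p, hp, hpnd, hpsub⟩ := isWalk_dedup p0.length p0 u w le_rfl hp0
  set A : Set (V × V) := {e | e ∈ p} with hA
  have hAE : A ⊆ E := fun e he => isWalk_edges hp e he
  set R : Set (V × V) := (E \ A) ∪ Prod.swap '' A with hR
  by_cases hreach : Reaches R u w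
  · -- augmenting path exists: build two edge-disjoint walks
    obtain ⟨q0, hq0⟩ := hreach
    obtain ⟨q, hq, hqnd, hqsub⟩ := isWalk_dedup q0.length q0 u w le_rfl hq0
    set Q : Set (V × V) := {e | e ∈ q} with hQ
    have hQR : Q ⊆ R := fun e he => isWalk_edges hq e he
    set Bf : Set (V × V) := Q ∩ (E \ A) with hBf
    set Br : Set (V × V) := Q \ (E \ A) with hBr
    have hBrA : Br ⊆ Prod.swap '' A := by
      rintro e ⟨heQ, heN⟩
      exact (hQR heQ).resolve_left heN
    set Cn : Set (V × V) := Prod.swap '' Br with hCn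
    have hCnA : Cn ⊆ A := by
      rintro e ⟨x, hx, rfl⟩
      obtain ⟨y, hy, hxy⟩ := hBrA hx
      rw [← hxy]
      simpa using hy
    set F : Set (V × V) := (A \ Cn) ∪ Bf with hF
    have hFE : F ⊆ E := by
      rintro e (⟨heA, -⟩ | ⟨-, heE, -⟩)
      · exact hAE heA
      · exact heE
    have hdisjF : Disjoint (A \ Cn) Bf := by
      rw [Set.disjoint_left]
      rintro e ⟨heA, -⟩ ⟨-, -, heNA⟩
      exact heNA heA
    have hQsplit : Q = Bf ∪ Br := (Set.inter_union_diff Q (E \ A)).symm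
    have hdisjQ : Disjoint Bf Br := by
      rw [Set.disjoint_left]
      rintro e ⟨-, heE⟩ ⟨-, heN⟩
      exact heN heE
    have hdegF : ∀ v, ddeg F v =
        2 * (if u = v then 1 else 0) - 2 * (if w = v then 1 else 0) := by
      intro v
      have h1 : ddeg A v = (if u = v then 1 else 0) - (if w = v then 1 else 0) :=
        ddeg_walkset hp hpnd v
      have h2' : ddeg Q v = (if u = v then 1 else 0) - (if w = v then 1 else 0) :=
        ddeg_walkset hq hqnd v
      have h3 : ddeg Q v = ddeg Bf v + ddeg Br v := by
        rw [hQsplit] at h2' ⊢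
        exact ddeg_union hdisjQ v
      have h4 : ddeg Cn v = - ddeg Br v := ddeg_swap_image Br v
      have h5 : ddeg F v = ddeg A v - ddeg Cn v + ddeg Bf v := by
        rw [hF, ddeg_union hdisjF v, ddeg_diff hCnA v]
      rw [hQsplit] at h2'
      rw [ddeg_union hdisjQ v] at h2'
      omega
    have hfu : (1 : ℤ) ≤ 2 * (if u = u then 1 else 0) - 2 * (if w = u then 1 else 0) := by
      have hz : (if w = u then (1 : ℤ) else 0) = 0 := if_neg (fun h => huw h.symm)
      rw [hz, if_pos rfl]
      omega
    have hnn : ∀ v, v ≠ w →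
        (0 : ℤ) ≤ 2 * (if u = v then 1 else 0) - 2 * (if w = v then 1 else 0) := by
      intro v hvw
      have hz : (if w = v then (1 : ℤ) else 0) = 0 := if_neg (fun h => hvw h.symm)
      rw [hz]
      split_ifs <;> omega
    obtain ⟨p1, hp1, hp1nd⟩ := extract_walk F.ncard F u
      (fun v => 2 * (if u = v then 1 else 0) - 2 * (if w = v then 1 else 0))
      rfl huw hdegF hfu hnn
    set P1 : Set (V × V) := {e | e ∈ p1} with hP1
    have hP1F : P1 ⊆ F := fun e he => isWalk_edges hp1 e he
    set F2 : Set (V × V) := F \ P1 with hF2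
    have hdegF2 : ∀ v, ddeg F2 v =
        (if u = v then 1 else 0) - (if w = v then 1 else 0) := by
      intro v
      have h1 := ddeg_walkset hp1 hp1nd v
      rw [← hP1] at h1
      have h2' := hdegF v
      rw [hF2, ddeg_diff hP1F v]
      omega
    have hfu2 : (1 : ℤ) ≤ (if u = u then 1 else 0) - (if w = u then 1 else 0) := by
      have hz : (if w = u then (1 : ℤ) else 0) = 0 := if_neg (fun h => huw h.symm)
      rw [hz, if_pos rfl]
      omega
    have hnn2 : ∀ v, v ≠ w →
        (0 : ℤ) ≤ (if u = v then 1 else 0) - (if w = v then 1 else 0) := by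
      intro v hvw
      have hz : (if w = v then (1 : ℤ) else 0) = 0 := if_neg (fun h => hvw h.symm)
      rw [hz]
      split_ifs <;> omega
    obtain ⟨p2, hp2, hp2nd⟩ := extract_walk F2.ncard F2 u
      (fun v => (if u = v then 1 else 0) - (if w = v then 1 else 0))
      rfl huw hdegF2 hfu2 hnn2
    refine ⟨p1, p2, isWalk_mono hFE hp1,
      isWalk_mono (fun e he => hFE (Set.diff_subset he)) hp2, ?_⟩
    intro e he1 he2
    exact (isWalk_edges hp2 e he2).2 he1
  · -- no augmenting path: a single edge separates u from w, contradiction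
    exfalso
    set U : Set V := {x | Reaches R u x} with hU
    have huU : u ∈ U := ⟨[], .nil u⟩
    have hwU : w ∉ U := hreach
    have hclosR : ∀ e ∈ R, e.1 ∈ U → e.2 ∈ U := by
      intro e he h1
      exact reaches_trans h1 (reaches_step (show (e.1, e.2) ∈ R by simpa using he))
    have hclA : ∀ e ∈ p, e.2 ∈ U → e.1 ∈ U := by
      intro e heP h2'
      have hswap : Prod.swap e ∈ R := Or.inr ⟨e, heP, rfl⟩
      exact hclosR _ hswap h2'
    obtain ⟨estar, hestarp, hx1, hx2⟩ := exists_cross hp huU hwU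
    have hcrossE : ∀ e' ∈ E, e'.1 ∈ U → e'.2 ∉ U → e' = estar := by
      intro e' he' h1 h2'
      have he'A : e' ∈ A := by
        by_contra hnA
        exact h2' (hclosR e' (Or.inl ⟨he', hnA⟩) h1)
      exact unique_cross hp hclA e' he'A estar hestarp h1 h2' hx1 hx2
    obtain ⟨pz, hpz⟩ := h2 estar
    obtain ⟨ez, hezp, hz1, hz2⟩ := exists_cross hpz huU hwU
    have hezE : ez ∈ E \ {estar} := isWalk_edges hpz _ hezp
    exact (by simpa using hezE.2 : ez ≠ estar) (hcrossE ez hezE.1 hz1 hz2)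

end Menger


section CutLemma

theorem cut_of_noreach [Fintype V] {V' : Type*} {E : Set (V × V)} (h : V → V')
    (hsurj : Function.Surjective h)
    (hcomp : ∀ u : V, Is2ECComponent E {v | h v = h u})
    (e : V × V) (a b : V) (hnr : ¬ Reaches (E \ {e}) a b) :
    ∃ S T : Set V', Disjoint S T ∧ S ∪ T = Set.univ ∧ h a ∈ S ∧ h b ∈ T ∧
      ∀ e' ∈ E, h e'.1 ∈ S → h e'.2 ∈ T → e' = e := by
  set U : Set V := {x | Reaches (E \ {e}) a x} with hUdef
  have haU : a ∈ U := ⟨[], .nil a⟩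
  have hbU : b ∉ U := hnr
  have hclos : ∀ x ∈ U, ∀ y, (x, y) ∈ E \ {e} → y ∈ U :=
    fun x hx y hxy => reaches_trans hx (reaches_step hxy)
  have hfiber : ∀ x ∈ U, ∀ y, h y = h x → y ∈ U := by
    intro x hx y hyx
    obtain ⟨⟨hSC', h2EC⟩, -⟩ := hcomp x
    have hxC : x ∈ {v | h v = h x} := rfl
    have hyC : y ∈ {v | h v = h x} := hyx
    have hreach : Reaches (restrictE E {v | h v = h x} \ {e}) x y := by
      by_cases he : e ∈ restrictE E {v | h v = h x}
      · exact h2EC e he x hxC y hyC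
      · rw [Set.diff_singleton_eq_self he]
        exact hSC' x hxC y hyC
    have hsub : restrictE E {v | h v = h x} \ {e} ⊆ E \ {e} :=
      fun f hf => ⟨hf.1.1, hf.2⟩
    exact reaches_trans hx (reaches_mono hsub hreach)
  refine ⟨h '' U, h '' Uᶜ, ?_, ?_, ⟨a, haU, rfl⟩, ⟨b, hbU, rfl⟩, ?_⟩
  · rw [Set.disjoint_left]
    rintro s ⟨x, hx, rfl⟩ ⟨y, hy, hyx⟩
    exact hy (hfiber x hx y hyx)
  · ext s
    simp only [Set.mem_union, Set.mem_univ, iff_true]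
    obtain ⟨v, rfl⟩ := hsurj s
    by_cases hv : v ∈ U
    · exact Or.inl ⟨v, hv, rfl⟩
    · exact Or.inr ⟨v, hv, rfl⟩
  · intro e' he' h1 h2
    obtain ⟨x, hx, hx'⟩ := h1
    have h1U : e'.1 ∈ U := hfiber x hx e'.1 hx'.symm
    obtain ⟨y, hy, hy'⟩ := h2
    have h2U : e'.2 ∉ U := fun hc => hy (hfiber e'.2 hc y hy')
    by_contra hne
    exact h2U (hclos e'.1 h1U e'.2 ⟨he', by simpa using hne⟩)

end CutLemma

theorem stmt10 {V' : Type*} [Fintype V] (E : Set (V × V)) (h : V → V')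
    (hsurj : Function.Surjective h)
    (hSC : StronglyConnected E)
    (hcomp : ∀ u : V, Is2ECComponent E {v | h v = h u})
    (u w : V) (hdiff : h u ≠ h w) :
    TwoEC E u w ↔
      ∀ S T : Set V', Disjoint S T → S ∪ T = Set.univ → h u ∈ S → h w ∈ T →
        (∃ e₁ ∈ E, ∃ e₂ ∈ E, e₁ ≠ e₂ ∧ h e₁.1 ≠ h e₁.2 ∧ h e₂.1 ≠ h e₂.2 ∧
          h e₁.1 ∈ S ∧ h e₁.2 ∈ T ∧ h e₂.1 ∈ S ∧ h e₂.2 ∈ T) ∧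
        (∃ e₁ ∈ E, ∃ e₂ ∈ E, e₁ ≠ e₂ ∧ h e₁.1 ≠ h e₁.2 ∧ h e₂.1 ≠ h e₂.2 ∧
          h e₁.1 ∈ T ∧ h e₁.2 ∈ S ∧ h e₂.1 ∈ T ∧ h e₂.2 ∈ S) := by
  constructor
  · rintro ⟨⟨p, q, hp, hq, hdisj⟩, ⟨p', q', hp', hq', hdisj'⟩⟩ S T hST hUnion hu hw
    constructor
    · have hwS : w ∉ {v | h v ∈ S} := fun hc => Set.disjoint_left.1 hST hc hw
      obtain ⟨e1, he1p, h11, h12⟩ := exists_cross (U := {v | h v ∈ S}) hp hu hwS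
      obtain ⟨e2, he2q, h21, h22⟩ := exists_cross (U := {v | h v ∈ S}) hq hu hwS
      have hTm : ∀ x : V, h x ∉ S → h x ∈ T := by
        intro x hx
        have : h x ∈ S ∪ T := hUnion ▸ Set.mem_univ _
        exact this.resolve_left hx
      refine ⟨e1, isWalk_edges hp e1 he1p, e2, isWalk_edges hq e2 he2q,
        fun hc => hdisj he1p (hc ▸ he2q),
        fun hc => h12 (show h e1.2 ∈ S from hc ▸ show h e1.1 ∈ S from h11),
        fun hc => h22 (show h e2.2 ∈ S from hc ▸ show h e2.1 ∈ S from h21),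
        h11, hTm _ h12, h21, hTm _ h22⟩
    · have huT : u ∉ {v | h v ∈ T} := fun hc => Set.disjoint_right.1 hST hc hu
      obtain ⟨e1, he1p, h11, h12⟩ := exists_cross (U := {v | h v ∈ T}) hp' hw huT
      obtain ⟨e2, he2q, h21, h22⟩ := exists_cross (U := {v | h v ∈ T}) hq' hw huT
      have hSm : ∀ x : V, h x ∉ T → h x ∈ S := by
        intro x hx
        have : h x ∈ S ∪ T := hUnion ▸ Set.mem_univ _
        exact this.resolve_right hx
      refine ⟨e1, isWalk_edges hp' e1 he1p, e2, isWalk_edges hq' e2 he2q,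
        fun hc => hdisj' he1p (hc ▸ he2q),
        fun hc => h12 (show h e1.2 ∈ T from hc ▸ show h e1.1 ∈ T from h11),
        fun hc => h22 (show h e2.2 ∈ T from hc ▸ show h e2.1 ∈ T from h21),
        h11, hSm _ h12, h21, hSm _ h22⟩
  · intro hcut
    constructor
    · apply menger_two
      intro e
      by_contra hnr
      obtain ⟨S, T, hd, hun, ha, hb, honly⟩ := cut_of_noreach h hsurj hcomp e u w hnr
      obtain ⟨⟨e1, he1, e2, he2, hne, -, -, h1S, h1T, h2S, h2T⟩, -⟩ :=
        hcut S T hd hun ha hb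
      exact hne ((honly e1 he1 h1S h1T).trans (honly e2 he2 h2S h2T).symm)
    · apply menger_two
      intro e
      by_contra hnr
      obtain ⟨S, T, hd, hun, ha, hb, honly⟩ := cut_of_noreach h hsurj hcomp e w u hnr
      obtain ⟨-, ⟨e1, he1, e2, he2, hne, -, -, h1S, h1T, h2S, h2T⟩⟩ :=
        hcut T S hd.symm (by rw [Set.union_comm]; exact hun) hb ha
      exact hne ((honly e1 he1 h1S h1T).trans (honly e2 he2 h2S h2T).symm)
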